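/- Let p be a prime and let G be a finitely generated group. Then G is residually p if and only if ⋂_{n=1}^∞ γ_n^p G = {1}, i.e. the lower 𝔽_p-linear central filtration of G is a separating filtration. -/

import Mathlib

/-! Common definitions following the paper "Residual p properties of mapping class groups
and surface groups" by L. Paris. -/

/-- The commutator `[g,h] = g⁻¹h⁻¹gh`. -/
def commAB {G : Type*} [Group G] (g h : G) : G := g⁻¹ * h⁻¹ * g * h

/-- The commutator subgroup `[K,H]`, generated by all `[g,h]` with `g ∈ K`, `h ∈ H`. -/
def commSub {G : Type*} [Group G] (K H : Subgroup G) : Subgroup G :=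
  Subgroup.closure {x | ∃ g ∈ K, ∃ h ∈ H, x = commAB g h}

/-- The subgroup `[K,H]^p`, generated by all `[g,h]` (`g ∈ K`, `h ∈ H`) together with all
`h^p` (`h ∈ H`). -/
def pComm (p : ℕ) {G : Type*} [Group G] (K H : Subgroup G) : Subgroup G :=
  Subgroup.closure ({x | ∃ g ∈ K, ∃ h ∈ H, x = commAB g h} ∪ {x | ∃ h ∈ H, x = h ^ p})

/-- The lower `𝔽_p`-linear central filtration: `γ_1^p G = G` and
`γ_{n+1}^p G = [G, γ_n^p G]^p` (with the harmless convention `γ_0^p G = G`). -/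
def gammaP (p : ℕ) (G : Type*) [Group G] : ℕ → Subgroup G
  | 0 => ⊤
  | 1 => ⊤
  | n + 2 => pComm p ⊤ (gammaP p G (n + 1))

theorem pComm_top_normal (p : ℕ) {G : Type*} [Group G] {H : Subgroup G} (hH : H.Normal) :
    (pComm p ⊤ H).Normal := by
  constructor
  intro x hx g
  unfold pComm at hx ⊢
  induction hx using Subgroup.closure_induction with
  | mem y hy =>
    apply Subgroup.subset_closure
    rcases hy with ⟨a, -, h, hh, rfl⟩ | ⟨h, hh, rfl⟩
    · exact Or.inl ⟨g * a * g⁻¹, trivial, g * h * g⁻¹, hH.conj_mem h hh g,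
        by unfold commAB; group⟩
    · exact Or.inr ⟨g * h * g⁻¹, hH.conj_mem h hh g, (conj_pow).symm⟩
  | one => simpa using Subgroup.one_mem _
  | mul a b ha hb iha ihb =>
    have e : g * (a * b) * g⁻¹ = (g * a * g⁻¹) * (g * b * g⁻¹) := by group
    rw [e]; exact Subgroup.mul_mem _ iha ihb
  | inv a ha iha =>
    have e : g * a⁻¹ * g⁻¹ = (g * a * g⁻¹)⁻¹ := by group
    rw [e]; exact Subgroup.inv_mem _ iha

instance gammaP_normal (p : ℕ) (G : Type*) [Group G] : ∀ n, (gammaP p G n).Normal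
  | 0 => by unfold gammaP; infer_instance
  | 1 => by unfold gammaP; infer_instance
  | n + 2 => by unfold gammaP; exact pComm_top_normal p (gammaP_normal p G (n + 1))

/-- `G` is residually `p`: every nontrivial element survives in some finite `p`-group
quotient. -/
def IsResiduallyP (p : ℕ) (G : Type*) [Group G] : Prop :=
  ∀ g : G, g ≠ 1 → ∃ (P : Type) (_ : Group P) (_ : Finite P) (φ : G →* P),
    IsPGroup p P ∧ Function.Surjective φ ∧ φ g ≠ 1

/-- `G` is conjugacy `p`-separable. -/
def IsConjPSeparable (p : ℕ) (G : Type*) [Group G] : Prop :=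
  ∀ g h : G, IsConj g h ∨ ∃ (P : Type) (_ : Group P) (_ : Finite P) (φ : G →* P),
    IsPGroup p P ∧ Function.Surjective φ ∧ ¬ IsConj (φ g) (φ h)

/-- Property A: every automorphism of `G` preserving every conjugacy class is inner. -/
def PropertyA (G : Type*) [Group G] : Prop :=
  ∀ α : MulAut G, (∀ g : G, IsConj g (α g)) → α ∈ (MulAut.conj : G →* MulAut G).range

/-- `A_n`: the kernel of the natural homomorphism `Aut(G) → Aut(G/γ_{n+1}^p G)`, i.e. the
automorphisms acting trivially modulo `γ_{n+1}^p G`. -/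
def An (p : ℕ) (G : Type*) [Group G] (n : ℕ) : Subgroup (MulAut G) where
  carrier := {α | ∀ g : G, g⁻¹ * α g ∈ gammaP p G (n + 1)}
  one_mem' := by intro g; simpa using Subgroup.one_mem _
  mul_mem' := by
    intro a b ha hb g
    have e : g⁻¹ * (a * b) g = (g⁻¹ * b g) * ((b g)⁻¹ * a (b g)) := by
      rw [MulAut.mul_apply]; group
    rw [e]; exact Subgroup.mul_mem _ (hb g) (ha (b g))
  inv_mem' := by
    intro a ha g
    have h := ha ((a⁻¹ : MulAut G) g)
    rw [MulAut.apply_inv_self] at h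
    have e : g⁻¹ * (a⁻¹ : MulAut G) g = (((a⁻¹ : MulAut G) g)⁻¹ * g)⁻¹ := by group
    rw [e]; exact Subgroup.inv_mem _ h

theorem mem_An {p : ℕ} {G : Type*} [Group G] {n : ℕ} {α : MulAut G} :
    α ∈ An p G n ↔ ∀ g : G, g⁻¹ * α g ∈ gammaP p G (n + 1) := Iff.rfl

/-- `I_p(G)`: the kernel of the natural homomorphism `Aut(G) → Aut(G/γ_2^p G)`. -/
abbrev Ip (p : ℕ) (G : Type*) [Group G] : Subgroup (MulAut G) := An p G 1

/-- `Inn(G)`, viewed as a subgroup of `I_p(G)`. -/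
def InnSub (p : ℕ) (G : Type*) [Group G] : Subgroup (Ip p G) :=
  Subgroup.comap (Ip p G).subtype (MulAut.conj : G →* MulAut G).range

instance innSub_normal (p : ℕ) (G : Type*) [Group G] : (InnSub p G).Normal := by
  constructor
  rintro n hn g
  obtain ⟨x, hx⟩ := hn
  refine ⟨(g : MulAut G) x, ?_⟩
  have hx' : MulAut.conj x = (n : MulAut G) := hx
  show MulAut.conj ((g : MulAut G) x) = ((g * n * g⁻¹ : Ip p G) : MulAut G)
  ext y
  simp only [Subgroup.coe_mul, Subgroup.coe_inv, MulAut.mul_apply, MulAut.conj_apply, ← hx',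
    map_mul, map_inv, MulAut.apply_inv_self]

/-- The surface relator `[x_1,y_1][x_2,y_2]⋯[x_ρ,y_ρ]` in the free group on
`x_1, …, x_ρ, y_1, …, y_ρ`. -/
def surfaceRel (ρ : ℕ) : FreeGroup (Fin ρ ⊕ Fin ρ) :=
  (List.ofFn fun i : Fin ρ =>
    commAB (FreeGroup.of (Sum.inl i)) (FreeGroup.of (Sum.inr i))).prod

/-- The fundamental group of the closed oriented surface of genus `ρ`, given by the
presentation `⟨x_1, …, x_ρ, y_1, …, y_ρ | [x_1,y_1]⋯[x_ρ,y_ρ] = 1⟩`. -/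
abbrev SurfaceGroup (ρ : ℕ) : Type :=
  PresentedGroup ({surfaceRel ρ} : Set (FreeGroup (Fin ρ ⊕ Fin ρ)))

/-! ### Auxiliary lemmas for Proposition 2.3 (2) -/

section Aux

variable {p : ℕ} {G : Type*} [Group G]

theorem pComm_le {H : Subgroup G} (hH : H.Normal) : pComm p ⊤ H ≤ H := by
  rw [pComm, Subgroup.closure_le]
  rintro x (⟨g, -, a, ha, rfl⟩ | ⟨a, ha, rfl⟩)
  · have e : commAB g a = (g⁻¹ * a⁻¹ * (g⁻¹)⁻¹) * a := by unfold commAB; group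
    simpa [e, SetLike.mem_coe] using H.mul_mem (hH.conj_mem _ (H.inv_mem ha) g⁻¹) ha
  · exact H.pow_mem ha p

theorem gammaP_succ_eq (n : ℕ) (hn : 1 ≤ n) :
    gammaP p G (n + 1) = pComm p ⊤ (gammaP p G n) := by
  cases n with
  | zero => omega
  | succ m => rfl

theorem gammaP_succ_le (n : ℕ) : gammaP p G (n + 1) ≤ gammaP p G n := by
  cases n with
  | zero => exact le_top
  | succ m =>
    rw [gammaP_succ_eq (m + 1) (Nat.le_add_left 1 m)]
    exact pComm_le (gammaP_normal p G (m + 1))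

theorem pComm_map {P : Type*} [Group P] {φ : G →* P} (hφ : Function.Surjective φ)
    (H : Subgroup G) : (pComm p ⊤ H).map φ = pComm p ⊤ (H.map φ) := by
  rw [pComm, pComm, MonoidHom.map_closure]
  congr 1
  ext x
  constructor
  · rintro ⟨y, ⟨g, -, a, ha, rfl⟩ | ⟨a, ha, rfl⟩, rfl⟩
    · exact Or.inl ⟨φ g, trivial, φ a, ⟨a, ha, rfl⟩, by simp [commAB, mul_assoc]⟩
    · exact Or.inr ⟨φ a, ⟨a, ha, rfl⟩, map_pow φ a p⟩
  · rintro (⟨g, -, b, ⟨a, ha, rfl⟩, rfl⟩ | ⟨b, ⟨a, ha, rfl⟩, rfl⟩)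
    · obtain ⟨g', rfl⟩ := hφ g
      exact ⟨commAB g' a, Or.inl ⟨g', trivial, a, ha, rfl⟩, by simp [commAB, mul_assoc]⟩
    · exact ⟨a ^ p, Or.inr ⟨a, ha, rfl⟩, map_pow φ a p⟩

theorem gammaP_map {P : Type*} [Group P] {φ : G →* P} (hφ : Function.Surjective φ) :
    ∀ n, (gammaP p G n).map φ = gammaP p P n
  | 0 => by simpa [gammaP] using Subgroup.map_top_of_surjective φ hφ
  | 1 => by simpa [gammaP] using Subgroup.map_top_of_surjective φ hφ
  | n + 2 => by
    show (pComm p ⊤ (gammaP p G (n + 1))).map φ = pComm p ⊤ (gammaP p P (n + 1))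
    rw [pComm_map hφ, gammaP_map hφ (n + 1)]

theorem commSub_top_normal {H : Subgroup G} (hH : H.Normal) : (commSub ⊤ H).Normal := by
  constructor
  intro x hx g
  unfold commSub at hx ⊢
  induction hx using Subgroup.closure_induction with
  | mem y hy =>
    obtain ⟨a, -, h, hh, rfl⟩ := hy
    exact Subgroup.subset_closure
      ⟨g * a * g⁻¹, trivial, g * h * g⁻¹, hH.conj_mem h hh g, by unfold commAB; group⟩
  | one => simpa using Subgroup.one_mem _
  | mul a b ha hb iha ihb =>
    have e : g * (a * b) * g⁻¹ = (g * a * g⁻¹) * (g * b * g⁻¹) := by group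
    rw [e]; exact Subgroup.mul_mem _ iha ihb
  | inv a ha iha =>
    have e : g * a⁻¹ * g⁻¹ = (g * a * g⁻¹)⁻¹ := by group
    rw [e]; exact Subgroup.inv_mem _ iha

open scoped commutatorElement in
theorem commSub_le_commutator {H : Subgroup G} :
    commSub ⊤ H ≤ ⁅H, (⊤ : Subgroup G)⁆ := by
  rw [commSub, Subgroup.closure_le]
  rintro x ⟨g, -, h, hh, rfl⟩
  have e : commAB g h = ⁅g⁻¹, h⁻¹⁆ := by
    rw [commutatorElement_def]; unfold commAB; group
  rw [SetLike.mem_coe, e, ← Subgroup.commutator_comm]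
  exact Subgroup.commutator_mem_commutator (Subgroup.mem_top _) (H.inv_mem hh)

theorem eq_bot_of_pComm_self {p : ℕ} (hp : p.Prime) {P : Type*} [Group P] [Finite P]
    (hP : IsPGroup p P) {N : Subgroup P} (hN : N.Normal) (h : pComm p ⊤ N = N) :
    N = ⊥ := by
  haveI : Fact p.Prime := ⟨hp⟩
  set M := commSub ⊤ N with hM
  haveI hMn : M.Normal := commSub_top_normal hN
  have hker : ∀ g ∈ N, ∀ q : P, commAB q g ∈ M :=
    fun g hg q => Subgroup.subset_closure ⟨q, trivial, g, hg, rfl⟩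
  -- Step 1: N ≤ M
  have hNM : N ≤ M := by
    set π := QuotientGroup.mk' M with hπ
    have hπs : Function.Surjective π := QuotientGroup.mk'_surjective M
    have hbar : N.map π = pComm p ⊤ (N.map π) := by
      conv_lhs => rw [← h]
      exact pComm_map hπs N
    have hcen : ∀ x ∈ N.map π, x ∈ Subgroup.center (P ⧸ M) := by
      rintro x ⟨a, ha, rfl⟩
      rw [Subgroup.mem_center_iff]
      intro q
      obtain ⟨g, rfl⟩ := hπs q
      have h1 : π (commAB g a) = 1 := (QuotientGroup.eq_one_iff _).mpr (hker a ha g)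
      have e : g * a = (a * g) * commAB g a := by unfold commAB; group
      calc π g * π a = π (g * a) := (map_mul π g a).symm
        _ = π (a * g) * π (commAB g a) := by rw [e, map_mul]
        _ = π a * π g := by rw [h1, mul_one, map_mul]
    -- the set of p-th powers of elements of N.map π is a subgroup
    let T : Subgroup (P ⧸ M) :=
      { carrier := {x | ∃ y ∈ N.map π, y ^ p = x}
        one_mem' := ⟨1, Subgroup.one_mem _, one_pow p⟩
        mul_mem' := by
          rintro a b ⟨y, hy, rfl⟩ ⟨z, hz, rfl⟩
          have hc : Commute y z := (Subgroup.mem_center_iff.mp (hcen y hy) z).symm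
          exact ⟨y * z, Subgroup.mul_mem _ hy hz, hc.mul_pow p⟩
        inv_mem' := by
          rintro a ⟨y, hy, rfl⟩
          exact ⟨y⁻¹, Subgroup.inv_mem _ hy, by rw [inv_pow]⟩ }
    have hsub : N.map π ≤ T := by
      conv_lhs => rw [hbar]
      rw [pComm, Subgroup.closure_le]
      rintro x (⟨g, -, b, hb, rfl⟩ | ⟨b, hb, rfl⟩)
      · obtain ⟨a, ha, rfl⟩ := hb
        obtain ⟨g', rfl⟩ := hπs g
        have h1 : commAB (π g') (π a) = 1 := by
          have : commAB (π g') (π a) = π (commAB g' a) := by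
            simp [commAB, mul_assoc]
          rw [this]
          exact (QuotientGroup.eq_one_iff _).mpr (hker a ha g')
        rw [SetLike.mem_coe, h1]
        exact T.one_mem
      · exact ⟨b, hb, rfl⟩
    obtain ⟨k, hk⟩ := IsPGroup.iff_card.mp (hP.to_quotient M)
    have hdiv : ∀ j, ∀ x ∈ N.map π, ∃ y ∈ N.map π, y ^ p ^ j = x := by
      intro j
      induction j with
      | zero => exact fun x hx => ⟨x, hx, by simp⟩
      | succ j ih =>
        intro x hx
        obtain ⟨y, hy, rfl⟩ := ih x hx
        obtain ⟨z, hz, rfl⟩ := hsub hy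
        exact ⟨z, hz, by rw [← pow_mul, pow_succ, mul_comm (p ^ j) p]⟩
    have hbot : N.map π = ⊥ := by
      rw [eq_bot_iff]
      intro x hx
      obtain ⟨y, -, rfl⟩ := hdiv k x hx
      rw [Subgroup.mem_bot, ← hk]
      exact pow_card_eq_one'
    rw [Subgroup.map_eq_bot_iff, QuotientGroup.ker_mk'] at hbot
    exact hbot
  -- Step 2: N is contained in the whole lower central series
  have hlcs : ∀ k, N ≤ Subgroup.lowerCentralSeries (⊤ : Subgroup P) k := by
    intro k
    induction k with
    | zero => exact le_top
    | succ k ih =>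
      calc N ≤ M := hNM
        _ ≤ ⁅N, ⊤⁆ := commSub_le_commutator
        _ ≤ ⁅Subgroup.lowerCentralSeries (⊤ : Subgroup P) k, ⊤⁆ := Subgroup.commutator_mono ih le_rfl
        _ = Subgroup.lowerCentralSeries (⊤ : Subgroup P) (k + 1) := (lowerCentralSeries_succ ⊤ k).symm
  haveI := hP.isNilpotent
  have hfin := hlcs (Group.nilpotencyClass P)
  rwa [lowerCentralSeries_nilpotencyClass, le_bot_iff] at hfin

theorem exists_gammaP_eq_bot {p : ℕ} (hp : p.Prime) (P : Type*) [Group P] [Finite P]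
    (hP : IsPGroup p P) : ∃ n, 1 ≤ n ∧ gammaP p P n = ⊥ := by
  by_contra hc
  push_neg at hc
  have hstrict : ∀ n, 1 ≤ n → gammaP p P (n + 1) < gammaP p P n := by
    intro n hn
    refine lt_of_le_of_ne (gammaP_succ_le n) fun heq => ?_
    have hb : gammaP p P n = ⊥ :=
      eq_bot_of_pComm_self hp hP (gammaP_normal p P n) (by rw [← gammaP_succ_eq n hn, heq])
    exact hc n hn hb
  have hcard : ∀ n, 1 ≤ n → Nat.card (gammaP p P (n + 1)) < Nat.card (gammaP p P n) := by
    intro n hn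
    have hlt := hstrict n hn
    have hss : ((gammaP p P (n + 1) : Subgroup P) : Set P) ⊂ (gammaP p P n : Set P) :=
      SetLike.coe_ssubset_coe.mpr hlt
    have := Set.ncard_lt_ncard hss (Set.toFinite _)
    simpa [← Nat.card_coe_set_eq] using this
  have key : ∀ n, Nat.card (gammaP p P (n + 1)) + n ≤ Nat.card (gammaP p P 1) := by
    intro n
    induction n with
    | zero => simp
    | succ n ih => have := hcard (n + 1) (Nat.le_add_left 1 n); omega
  have hfinal := key (Nat.card (gammaP p P 1) + 1)
  have hpos : 0 < Nat.card (gammaP p P (Nat.card (gammaP p P 1) + 1 + 1)) := Nat.card_pos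
  omega

/-- For a finitely generated group, the quotients by the `gammaP` filtration are
finite `p`-groups. -/
theorem gammaP_quotient_finite_pgroup (p : ℕ) (hp : p.Prime) {G : Type*} [Group G]
    (hfg : Group.FG G) :
    ∀ n, Finite (G ⧸ gammaP p G n) ∧ IsPGroup p (G ⧸ gammaP p G n)
  | 0 => by
    haveI : Subsingleton (G ⧸ gammaP p G 0) := QuotientGroup.subsingleton_quotient_top
    exact ⟨inferInstance, fun g => ⟨0, Subsingleton.elim _ _⟩⟩
  | 1 => by
    haveI : Subsingleton (G ⧸ gammaP p G 1) := QuotientGroup.subsingleton_quotient_top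
    exact ⟨inferInstance, fun g => ⟨0, Subsingleton.elim _ _⟩⟩
  | n + 2 => by
    obtain ⟨ihFin, ihP⟩ := gammaP_quotient_finite_pgroup p hp hfg (n + 1)
    set A := gammaP p G (n + 1) with hA
    set B := gammaP p G (n + 2) with hB
    haveI : A.Normal := gammaP_normal p G (n + 1)
    haveI : B.Normal := gammaP_normal p G (n + 2)
    have hBA : B ≤ A := gammaP_succ_le (n + 1)
    have hBdef : B = pComm p ⊤ A := rfl
    set π := QuotientGroup.mk' B with hπ
    have hπs : Function.Surjective π := QuotientGroup.mk'_surjective B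
    set C := A.map π with hC
    -- C is central in G ⧸ B
    have hcen : ∀ x ∈ C, x ∈ Subgroup.center (G ⧸ B) := by
      rintro x ⟨a, ha, rfl⟩
      rw [Subgroup.mem_center_iff]
      intro q
      obtain ⟨g, rfl⟩ := hπs q
      have hcm : commAB g a ∈ B := by
        rw [hBdef]; exact Subgroup.subset_closure (Or.inl ⟨g, trivial, a, ha, rfl⟩)
      have h1 : π (commAB g a) = 1 := (QuotientGroup.eq_one_iff _).mpr hcm
      have e : g * a = (a * g) * commAB g a := by unfold commAB; group
      calc π g * π a = π (g * a) := (map_mul π g a).symm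
        _ = π (a * g) * π (commAB g a) := by rw [e, map_mul]
        _ = π a * π g := by rw [h1, mul_one, map_mul]
    -- every element of C has order dividing p
    have hpow : ∀ x ∈ C, x ^ p = 1 := by
      rintro x ⟨a, ha, rfl⟩
      have hm : a ^ p ∈ B := by
        rw [hBdef]; exact Subgroup.subset_closure (Or.inr ⟨a, ha, rfl⟩)
      rw [← map_pow]
      exact (QuotientGroup.eq_one_iff _).mpr hm
    haveI hCn : C.Normal := Subgroup.Normal.map ‹A.Normal› π hπs
    let e : ((G ⧸ B) ⧸ C) ≃* G ⧸ A := QuotientGroup.quotientQuotientEquivQuotient B A hBA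
    haveI : Finite ((G ⧸ B) ⧸ C) := Finite.of_equiv _ e.symm.toEquiv
    have hQC : IsPGroup p ((G ⧸ B) ⧸ C) := ihP.of_equiv e.symm
    haveI : C.FiniteIndex := Subgroup.finiteIndex_of_finite_quotient (H := C)
    haveI : Group.FG (G ⧸ B) := QuotientGroup.fg B
    haveI : Group.FG C := Subgroup.fg_of_index_ne_zero C
    letI : CommGroup C :=
      { (inferInstance : Group C) with
        mul_comm := fun a b => Subtype.ext (Subgroup.mem_center_iff.mp (hcen b b.2) a) }
    have htor : Monoid.IsTorsion C := fun x =>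
      isOfFinOrder_iff_pow_eq_one.mpr ⟨p, hp.pos, Subtype.ext (by simpa using hpow ↑x x.2)⟩
    haveI : Finite C := CommGroup.finite_of_fg_torsion ↥C htor
    haveI hQfin : Finite (G ⧸ B) :=
      Finite.of_equiv _ (Subgroup.groupEquivQuotientProdSubgroup (s := C)).symm
    refine ⟨hQfin, fun x => ?_⟩
    obtain ⟨k, hk⟩ := hQC (QuotientGroup.mk' C x)
    have hmem : x ^ p ^ k ∈ C := by
      rw [← map_pow] at hk
      exact (QuotientGroup.eq_one_iff _).mp hk
    exact ⟨k + 1, by rw [pow_succ, pow_mul]; exact hpow _ hmem⟩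

end Aux

/-- **Proposition 2.3 (2).** A finitely generated group `G` is residually `p` if and only if
its lower `𝔽_p`-linear central filtration is separating. -/
theorem residuallyP_iff_gammaP_separating (p : ℕ) (hp : p.Prime) (G : Type*) [Group G]
    (hfg : Group.FG G) :
    IsResiduallyP p G ↔ (⨅ (n : ℕ) (_ : 1 ≤ n), gammaP p G n) = ⊥ := by
  constructor
  · intro hres
    rw [eq_bot_iff]
    intro g hg
    simp only [Subgroup.mem_iInf] at hg
    rw [Subgroup.mem_bot]
    by_contra hne
    obtain ⟨P, _, _, φ, hPgrp, hφs, hφg⟩ := hres g hne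
    obtain ⟨n, hn1, hbot⟩ := exists_gammaP_eq_bot hp P hPgrp
    have hmem : φ g ∈ gammaP p P n := by
      rw [← gammaP_map hφs n]
      exact ⟨g, hg n hn1, rfl⟩
    rw [hbot, Subgroup.mem_bot] at hmem
    exact hφg hmem
  · intro hsep g hg
    have hnot : g ∉ (⨅ (n : ℕ) (_ : 1 ≤ n), gammaP p G n) := by
      rw [hsep, Subgroup.mem_bot]; exact hg
    simp only [Subgroup.mem_iInf, not_forall] at hnot
    obtain ⟨n, hn1, hgn⟩ := hnot
    haveI := gammaP_normal p G n
    obtain ⟨hFin, hPg⟩ := gammaP_quotient_finite_pgroup p hp hfg n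
    haveI : Finite (G ⧸ gammaP p G n) := hFin
    haveI : Small.{0} (G ⧸ gammaP p G n) := Countable.toSmall _
    refine ⟨Shrink.{0} (G ⧸ gammaP p G n), inferInstance,
      Finite.of_equiv _ (equivShrink _),
      (Shrink.mulEquiv.symm.toMonoidHom.comp (QuotientGroup.mk' (gammaP p G n))),
      hPg.of_equiv Shrink.mulEquiv.symm, ?_, ?_⟩
    · rw [MonoidHom.coe_comp]
      exact Shrink.mulEquiv.symm.surjective.comp (QuotientGroup.mk'_surjective _)
    · intro h1
      apply hgn
      have h2 : (QuotientGroup.mk' (gammaP p G n)) g = 1 :=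
        Shrink.mulEquiv.symm.injective (by simpa using h1)
      exact (QuotientGroup.eq_one_iff g).mp h2
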